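/- Corollary: Let (X,d) be a nonempty complete metric space and φ a comparison function for which there exists a sequence (cₙ) of nonnegative reals with ∑ cₙ convergent and φⁿ(t) ≤ cₙ·t for all t ≥ 0 and n ∈ ℕ. Then any strong φ-quasicontraction T : X → X has a unique fixed point, and for every x ∈ X the sequence of iterates (Tⁿx) converges to this fixed point. -/

import Mathlib

open Metric Set Function Filter Topology

def IsComparisonFn (φ : ℝ → ℝ) : Prop :=
  MonotoneOn φ (Set.Ici 0) ∧ UpperSemicontinuousOn φ (Set.Ici 0) ∧
    (∀ t, 0 ≤ t → 0 ≤ φ t) ∧ φ 0 = 0 ∧ ∀ t, 0 < t → φ t < t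

def orbitOf {X : Type*} (T : X → X) (x : X) : Set X :=
  Set.range fun n : ℕ => T^[n] x

def dorbitOf {X : Type*} (T : X → X) (x y : X) : Set X :=
  orbitOf T x ∪ orbitOf T y

def IsWeakQuasicontraction {X : Type*} [MetricSpace X] (φ : ℝ → ℝ) (T : X → X) : Prop :=
  (∀ x : X, Bornology.IsBounded (orbitOf T x)) ∧
    ∀ x y : X, dist (T x) (T y) ≤ φ (Metric.diam (dorbitOf T x y))

def IsStrongQuasicontraction {X : Type*} [MetricSpace X] (φ : ℝ → ℝ) (T : X → X) : Prop :=
  ∀ x y : X, dist (T x) (T y) ≤ φ (Metric.diam {x, y, T x, T y})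

lemma myIterNonneg (φ : ℝ → ℝ) (hφ : IsComparisonFn φ) :
    ∀ m : ℕ, ∀ t : ℝ, 0 ≤ t → 0 ≤ φ^[m] t := by
  intro m
  induction m with
  | zero => simp
  | succ m ih =>
    intro t ht
    rw [Function.iterate_succ_apply']
    exact hφ.2.2.1 _ (ih t ht)

lemma myIterBound {X : Type*} [MetricSpace X] (φ : ℝ → ℝ) (T : X → X)
    (hφ : IsComparisonFn φ) (hT : IsStrongQuasicontraction φ T)
    (x : X) (s : Set X) (hb : Bornology.IsBounded s) (n : ℕ)
    (hmem : ∀ l, l ≤ n → T^[l] x ∈ s) :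
    ∀ m i j : ℕ, m ≤ i → m ≤ j → i ≤ n → j ≤ n →
      dist (T^[i] x) (T^[j] x) ≤ φ^[m] (Metric.diam s) := by
  intro m
  induction m with
  | zero =>
    intro i j _ _ hi hj
    exact Metric.dist_le_diam_of_mem hb (hmem i hi) (hmem j hj)
  | succ m ih =>
    intro i j hmi hmj hin hjn
    obtain ⟨i', rfl⟩ : ∃ i', i = i' + 1 := ⟨i - 1, by omega⟩
    obtain ⟨j', rfl⟩ : ∃ j', j = j' + 1 := ⟨j - 1, by omega⟩
    have hnn : 0 ≤ φ^[m] (Metric.diam s) := myIterNonneg φ hφ m _ Metric.diam_nonneg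
    set f : ℕ → X := fun l => T^[l] x with hf
    have hdiam : Metric.diam ({f i', f j', T (f i'), T (f j')} : Set X)
        ≤ φ^[m] (Metric.diam s) := by
      have h4 : ({f i', f j', T (f i'), T (f j')} : Set X)
          = f '' ({i', j', i' + 1, j' + 1} : Set ℕ) := by
        simp only [Set.image_insert_eq, Set.image_singleton, hf]
        rw [← Function.iterate_succ_apply' T i' x, ← Function.iterate_succ_apply' T j' x]
      rw [h4]
      apply Metric.diam_le_of_forall_dist_le hnn
      rintro u ⟨a, ha, rfl⟩ v ⟨b, hb', rfl⟩
      simp only [Set.mem_insert_iff, Set.mem_singleton_iff] at ha hb'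
      apply ih a b <;> omega
    calc dist (f (i' + 1)) (f (j' + 1))
        = dist (T (f i')) (T (f j')) := by
          simp only [hf, Function.iterate_succ_apply']
      _ ≤ φ (Metric.diam ({f i', f j', T (f i'), T (f j')} : Set X)) := hT _ _
      _ ≤ φ (φ^[m] (Metric.diam s)) :=
          hφ.1 (Set.mem_Ici.2 Metric.diam_nonneg) (Set.mem_Ici.2 hnn) hdiam
      _ = φ^[m + 1] (Metric.diam s) := (Function.iterate_succ_apply' φ m _).symm

theorem strongQuasicontraction_fixedPoint_of_summable {X : Type*} [MetricSpace X]
    [CompleteSpace X] [Nonempty X] (φ : ℝ → ℝ) (T : X → X)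
    (hφ : IsComparisonFn φ) (c : ℕ → ℝ) (hc0 : ∀ n, 0 ≤ c n) (hc : Summable c)
    (hφc : ∀ n : ℕ, ∀ t : ℝ, 0 ≤ t → φ^[n] t ≤ c n * t)
    (hT : IsStrongQuasicontraction φ T) :
    ∃ x₀ : X, T x₀ = x₀ ∧ (∀ y : X, T y = y → y = x₀) ∧
      ∀ x : X, Filter.Tendsto (fun n : ℕ => T^[n] x) Filter.atTop (nhds x₀) := by
  have hc' : Tendsto c atTop (𝓝 0) := hc.tendsto_atTop_zero
  obtain ⟨k, hk⟩ : ∃ k, c k ≤ 1 / 2 :=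
    (hc'.eventually (ge_mem_nhds (by norm_num : (0:ℝ) < 1 / 2))).exists
  -- main claim: for every x, the orbit converges to a fixed point
  have key : ∀ x : X, ∃ p : X, T p = p ∧
      Tendsto (fun n : ℕ => T^[n] x) atTop (𝓝 p) := by
    intro x
    set f : ℕ → X := fun n => T^[n] x with hf
    set Δ : ℕ → ℝ := fun n => Metric.diam (f '' Set.Iic n) with hΔ
    have hΔb : ∀ n, Bornology.IsBounded (f '' Set.Iic n) :=
      fun n => ((Set.finite_Iic n).image f).isBounded
    have hΔ0 : ∀ n, 0 ≤ Δ n := fun n => Metric.diam_nonneg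
    have hΔmono : ∀ a b : ℕ, a ≤ b → Δ a ≤ Δ b := fun a b h =>
      Metric.diam_mono (Set.image_mono (Set.Iic_subset_Iic.2 h)) (hΔb b)
    -- boundedness of the orbit
    have hΔbound : ∀ n, Δ n ≤ 2 * Δ k := by
      intro n
      rcases le_or_gt n k with h | h
      · have := hΔmono n k h
        linarith [hΔ0 k]
      · have hkn : k ≤ n := h.le
        have hck : ∀ i j : ℕ, k ≤ i → k ≤ j → i ≤ n → j ≤ n →
            dist (f i) (f j) ≤ c k * Δ n := by
          intro i j hi hj hin hjn
          refine (myIterBound φ T hφ hT x _ (hΔb n) n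
            (fun l hl => Set.mem_image_of_mem f hl) k i j hi hj hin hjn).trans ?_
          exact hφc k _ (hΔ0 n)
        have hCnn : (0:ℝ) ≤ Δ k + c k * Δ n := by
          have := mul_nonneg (hc0 k) (hΔ0 n); linarith [hΔ0 k]
        have hineq : Δ n ≤ Δ k + c k * Δ n := by
          apply Metric.diam_le_of_forall_dist_le hCnn
          rintro u ⟨a, ha, rfl⟩ v ⟨b, hb, rfl⟩
          simp only [Set.mem_Iic] at ha hb
          have hda : ∀ i j : ℕ, i ≤ k → j ≤ k → dist (f i) (f j) ≤ Δ k := by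
            intro i j hi hj
            exact Metric.dist_le_diam_of_mem (hΔb k)
              (Set.mem_image_of_mem f hi) (Set.mem_image_of_mem f hj)
          rcases le_total a k with hak | hak <;> rcases le_total b k with hbk | hbk
          · have := hda a b hak hbk
            nlinarith [hΔ0 n, hc0 k]
          · calc dist (f a) (f b) ≤ dist (f a) (f k) + dist (f k) (f b) :=
                dist_triangle _ _ _
              _ ≤ Δ k + c k * Δ n := by
                have h1 := hda a k hak le_rfl
                have h2 := hck k b le_rfl hbk hkn hb
                linarith
          · calc dist (f a) (f b) ≤ dist (f a) (f k) + dist (f k) (f b) :=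
                dist_triangle _ _ _
              _ ≤ Δ k + c k * Δ n := by
                have h1 := hck a k hak le_rfl ha hkn
                have h2 := hda k b le_rfl hbk
                linarith
          · have := hck a b hak hbk ha hb
            linarith [hΔ0 k]
        have : c k * Δ n ≤ (1 / 2) * Δ n :=
          mul_le_mul_of_nonneg_right hk (hΔ0 n)
        linarith
    have hrb : Bornology.IsBounded (Set.range f) := by
      rw [Metric.isBounded_iff]
      refine ⟨2 * Δ k, ?_⟩
      rintro u ⟨a, rfl⟩ v ⟨b, rfl⟩
      have : dist (f a) (f b) ≤ Δ (max a b) :=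
        Metric.dist_le_diam_of_mem (hΔb (max a b))
          (Set.mem_image_of_mem f (Set.mem_Iic.2 (le_max_left a b)))
          (Set.mem_image_of_mem f (Set.mem_Iic.2 (le_max_right a b)))
      exact this.trans (hΔbound _)
    set D : ℝ := Metric.diam (Set.range f) with hD
    have hD0 : 0 ≤ D := Metric.diam_nonneg
    have htail : ∀ m i j : ℕ, m ≤ i → m ≤ j → dist (f i) (f j) ≤ c m * D := by
      intro m i j hi hj
      refine (myIterBound φ T hφ hT x _ hrb (max i j)
        (fun l _ => Set.mem_range_self l) m i j hi hj
        (le_max_left i j) (le_max_right i j)).trans ?_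
      exact hφc m D hD0
    have hcauchy : CauchySeq f := by
      refine cauchySeq_of_le_tendsto_0 (fun m => c m * D)
        (fun i j m hi hj => htail m i j hi hj) ?_
      simpa using hc'.mul_const D
    obtain ⟨p, hp⟩ := cauchySeq_tendsto_of_complete hcauchy
    refine ⟨p, ?_, hp⟩
    -- p is a fixed point
    by_contra hfix
    set r : ℝ := dist p (T p) with hr
    have hr0 : 0 < r := by
      rcases (dist_nonneg : 0 ≤ r).lt_or_eq with h | h
      · exact h
      · exact absurd (dist_eq_zero.1 h.symm).symm hfix
    have hφr : φ r < r := hφ.2.2.2.2 r hr0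
    set y : ℝ := (φ r + r) / 2 with hy
    have hy1 : φ r < y := by rw [hy]; linarith
    have hy2 : y < r := by rw [hy]; linarith
    have husc : ∀ᶠ s in 𝓝[Set.Ici (0:ℝ)] r, φ s < y :=
      hφ.2.1 r (Set.mem_Ici.2 dist_nonneg) y hy1
    set e : ℕ → ℝ := fun n => dist (f n) p + dist (f (n + 1)) p with he
    have he0 : ∀ n, 0 ≤ e n := fun n => by positivity
    have hd1 : Tendsto (fun n => dist (f n) p) atTop (𝓝 0) :=
      tendsto_iff_dist_tendsto_zero.1 hp
    have hd2 : Tendsto (fun n => dist (f (n + 1)) p) atTop (𝓝 0) :=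
      tendsto_iff_dist_tendsto_zero.1 (hp.comp (tendsto_add_atTop_nat 1))
    have hetend : Tendsto e atTop (𝓝 0) := by
      simpa using hd1.add hd2
    set S : ℕ → Set X := fun n => {p, f n, T p, T (f n)} with hS
    have hSdiam : ∀ n, Metric.diam (S n) ≤ r + e n := by
      intro n
      have hTfn : T (f n) = f (n + 1) := (Function.iterate_succ_apply' T n x).symm
      apply Metric.diam_le_of_forall_dist_le (by linarith [he0 n, hr0.le])
      intro u hu v hv
      simp only [hS, Set.mem_insert_iff, Set.mem_singleton_iff, hTfn] at hu hv
      have hen : e n = dist (f n) p + dist (f (n + 1)) p := rfl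
      have c1 : dist (f n) p = dist p (f n) := dist_comm _ _
      have c2 : dist (f (n + 1)) p = dist p (f (n + 1)) := dist_comm _ _
      have c3 : dist (T p) p = dist p (T p) := dist_comm _ _
      have f0 : dist p p = 0 := dist_self p
      have n1 : (0:ℝ) ≤ dist p (f n) := dist_nonneg
      have n2 : (0:ℝ) ≤ dist p (f (n + 1)) := dist_nonneg
      have n3 : (0:ℝ) ≤ dist p (T p) := dist_nonneg
      have hrr : r = dist p (T p) := hr
      rcases hu with hu | hu | hu | hu <;> rcases hv with hv | hv | hv | hv <;>
        rw [hu, hv] <;>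
        first
          | (rw [dist_self]; linarith)
          | (refine (dist_triangle _ p _).trans ?_; linarith)
    set u : ℕ → ℝ := fun n => max r (Metric.diam (S n)) with hu
    have hu1 : ∀ n, r ≤ u n := fun n => le_max_left _ _
    have hu2 : ∀ n, u n ≤ r + e n := fun n =>
      max_le (by linarith [he0 n]) (hSdiam n)
    have hutend : Tendsto u atTop (𝓝[Set.Ici (0:ℝ)] r) := by
      rw [tendsto_nhdsWithin_iff]
      constructor
      · refine tendsto_of_tendsto_of_tendsto_of_le_of_le
          (tendsto_const_nhds) ?_ hu1 hu2
        simpa using tendsto_const_nhds.add hetend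
      · exact Eventually.of_forall fun n => Set.mem_Ici.2 (le_trans hr0.le (hu1 n))
    have hev1 : ∀ᶠ n in atTop, φ (u n) < y := hutend.eventually husc
    have hev2 : ∀ᶠ n in atTop, dist (f (n + 1)) p < r - y :=
      hd2.eventually (gt_mem_nhds (by linarith : (0:ℝ) < r - y))
    obtain ⟨n, h1, h2⟩ := (hev1.and hev2).exists
    have hc1 : dist (T p) (f (n + 1)) ≤ φ (Metric.diam (S n)) := by
      have hTfn : T (f n) = f (n + 1) := (Function.iterate_succ_apply' T n x).symm
      have := hT p (f n)
      rw [hTfn] at this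
      simpa [hS, hTfn] using this
    have hc2 : φ (Metric.diam (S n)) ≤ φ (u n) :=
      hφ.1 (Set.mem_Ici.2 Metric.diam_nonneg)
        (Set.mem_Ici.2 (le_trans hr0.le (hu1 n))) (le_max_right _ _)
    have : r ≤ dist p (f (n + 1)) + dist (f (n + 1)) (T p) := dist_triangle _ _ _
    rw [dist_comm p (f (n + 1)), dist_comm (f (n + 1)) (T p)] at this
    linarith
  -- assemble
  obtain ⟨x₀, hx₀, hten₀⟩ := key (Classical.arbitrary X)
  have huniq : ∀ z : X, T z = z → z = x₀ := by
    intro z hz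
    by_contra hne
    have hpos : 0 < dist z x₀ := dist_pos.2 hne
    have hset : ({z, x₀, z, x₀} : Set X) = {z, x₀} := by
      ext w
      simp only [Set.mem_insert_iff, Set.mem_singleton_iff]
      tauto
    have := hT z x₀
    rw [hz, hx₀, hset, Metric.diam_pair] at this
    linarith [hφ.2.2.2.2 _ hpos]
  refine ⟨x₀, hx₀, huniq, fun x => ?_⟩
  obtain ⟨p, hpfix, hpten⟩ := key x
  rwa [huniq p hpfix] at hpten
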